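/- Let Γ be a symmetric d×d real matrix with zero diagonal and fix k ∈ {1, …, d}. Then the Farris transform Σ^{(k)} of Γ at k is positive definite if and only if Γ is strictly conditionally negative definite. -/

import Mathlib

open Matrix

/-- The Farris transform `Σ^{(k)}` of `Γ` at `k`,
`Σ^{(k)}_{ij} = (Γ_{ik} + Γ_{jk} − Γ_{ij})/2` for `i, j ≠ k`. -/
noncomputable def farris {d : ℕ} (Γ : Matrix (Fin d) (Fin d) ℝ) (k : Fin d) :
    Matrix {i : Fin d // i ≠ k} {i : Fin d // i ≠ k} ℝ :=
  Matrix.of fun i j => (Γ (i : Fin d) k + Γ (j : Fin d) k - Γ (i : Fin d) (j : Fin d)) / 2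

lemma split_sum {d : ℕ} (k : Fin d) (f : Fin d → ℝ) :
    ∑ i, f i = f k + ∑ i : {i : Fin d // i ≠ k}, f i := by
  classical
  rw [Fintype.sum_eq_add_sum_compl k f]
  congr 1
  exact Finset.sum_subtype ({k}ᶜ) (fun i => by simp) f

lemma farris_key {d : ℕ} (k : Fin d) (Γ : Matrix (Fin d) (Fin d) ℝ)
    (hsym : Γ.IsSymm) (hdiag : Γ k k = 0) (y : {i : Fin d // i ≠ k} → ℝ) :
    (fun i => if h : i = k then -(∑ j, y j) else y ⟨i, h⟩) ⬝ᵥ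
      Γ.mulVec (fun i => if h : i = k then -(∑ j, y j) else y ⟨i, h⟩)
      = -2 * (y ⬝ᵥ (farris Γ k).mulVec y) := by
  classical
  set x : Fin d → ℝ := fun i => if h : i = k then -(∑ j, y j) else y ⟨i, h⟩ with hxdef
  set s : ℝ := ∑ j, y j with hs
  have hx_k : x k = -s := dif_pos rfl
  have hx : ∀ i : {i : Fin d // i ≠ k}, x ↑i = y i := fun i => dif_neg i.2
  set T : ℝ := ∑ j : {i : Fin d // i ≠ k}, Γ ↑j k * y j with hT
  set U : {i : Fin d // i ≠ k} → ℝ := fun i => ∑ j : {i : Fin d // i ≠ k}, Γ ↑i ↑j * y j with hU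
  have inner : ∀ i, Γ.mulVec x i = Γ i k * (-s) + ∑ j : {i : Fin d // i ≠ k}, Γ i ↑j * y j := by
    intro i
    rw [Matrix.mulVec, dotProduct, split_sum k, hx_k]
    congr 1
    exact Finset.sum_congr rfl fun j _ => by rw [hx]
  have hsymm : ∀ i j : Fin d, Γ i j = Γ j i := fun i j => (hsym.apply j i)
  rw [dotProduct, split_sum k]
  rw [inner k, hdiag, hx_k]
  have hTk : (∑ j : {i : Fin d // i ≠ k}, Γ k ↑j * y j) = T := by
    exact Finset.sum_congr rfl fun j _ => by rw [hsymm k ↑j]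
  rw [hTk]
  have step1 : ∀ i : {i : Fin d // i ≠ k}, x ↑i * Γ.mulVec x ↑i
      = y i * (Γ ↑i k * (-s)) + y i * U i := by
    intro i
    rw [hx, inner ↑i, mul_add]
  have rhs_inner : ∀ i : {i : Fin d // i ≠ k},
      ((farris Γ k).mulVec y) i = (Γ ↑i k * s + T - U i) / 2 := by
    intro i
    rw [Matrix.mulVec, dotProduct]
    have : ∀ j : {i : Fin d // i ≠ k},
        farris Γ k i j * y j = (Γ ↑i k * y j) / 2 + (Γ ↑j k * y j) / 2 - (Γ ↑i ↑j * y j) / 2 := by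
      intro j; simp only [farris, Matrix.of_apply]; ring
    rw [Finset.sum_congr rfl fun j _ => this j]
    rw [Finset.sum_sub_distrib, Finset.sum_add_distrib, ← Finset.sum_div, ← Finset.sum_div,
      ← Finset.sum_div, ← Finset.mul_sum, hU]
    ring
  rw [dotProduct, Finset.sum_congr rfl fun i _ => step1 i]
  simp only [rhs_inner]
  have hsT : -s * (0 * -s + T) = ∑ i : {i : Fin d // i ≠ k}, y i * (-T) := by
    rw [← Finset.sum_mul, ← hs]; ring
  rw [hsT, ← Finset.sum_add_distrib, Finset.mul_sum]
  exact Finset.sum_congr rfl fun i _ => by ring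

/-- For a symmetric matrix `Γ` with zero diagonal, the Farris transform `Σ^{(k)}` is
positive definite if and only if `Γ` is strictly conditionally negative definite. -/
theorem farris_posDef_iff_scnd {d : ℕ} (k : Fin d) (Γ : Matrix (Fin d) (Fin d) ℝ)
    (hsym : Γ.IsSymm) (hdiag : ∀ i, Γ i i = 0) :
    (farris Γ k).PosDef ↔
      ∀ x : Fin d → ℝ, x ≠ 0 → (∑ i, x i) = 0 → x ⬝ᵥ Γ.mulVec x < 0 := by
  classical
  have hsymm : ∀ i j : Fin d, Γ i j = Γ j i := fun i j => (hsym.apply j i)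
  constructor
  · rintro hPD x hx hsum
    obtain ⟨-, hpd⟩ := posDef_iff_dotProduct_mulVec.mp hPD
    set y : {i : Fin d // i ≠ k} → ℝ := fun i => x ↑i with hy
    have hxk : x k = -(∑ j, y j) := by
      have := split_sum k x
      rw [hsum] at this
      linarith
    have hext : (fun i => if h : i = k then -(∑ j, y j) else y ⟨i, h⟩) = x := by
      funext i
      by_cases h : i = k
      · subst h; rw [dif_pos rfl, hxk]
      · rw [dif_neg h]
    have hy0 : y ≠ 0 := by
      intro h0
      apply hx
      funext i
      by_cases h : i = k
      · subst h; rw [hxk, h0]; simp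
      · have := congrFun h0 ⟨i, h⟩; simpa [hy] using this
    have := hpd (x := y) hy0
    have hkey := farris_key k Γ hsym (hdiag k) y
    rw [hext] at hkey
    rw [hkey]
    simp only [star_trivial] at this
    nlinarith
  · intro h
    rw [posDef_iff_dotProduct_mulVec]
    constructor
    · ext i j
      simp only [farris, Matrix.conjTranspose_apply, Matrix.of_apply, star_trivial]
      rw [hsymm ↑i ↑j]; ring
    · intro y hy0
      set x : Fin d → ℝ := fun i => if h : i = k then -(∑ j, y j) else y ⟨i, h⟩ with hx
      have hx0 : x ≠ 0 := by
        intro h0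
        apply hy0
        funext i
        have := congrFun h0 ↑i
        simpa [hx, dif_neg i.2] using this
      have hsum : (∑ i, x i) = 0 := by
        rw [split_sum k x]
        have h1 : x k = -(∑ j, y j) := dif_pos rfl
        have h2 : ∀ i : {i : Fin d // i ≠ k}, x ↑i = y i := fun i => dif_neg i.2
        rw [h1, Finset.sum_congr rfl fun i _ => h2 i]
        ring
      have := h x hx0 hsum
      have hkey := farris_key k Γ hsym (hdiag k) y
      rw [← hx] at hkey
      rw [hkey] at this
      simp only [star_trivial]
      nlinarith
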